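/- arXiv:1602.07283 — 3 statements merged into one kernel-verified Lean document; each statement's English description precedes it below -/
import Mathlib

section
/- Let h = f + g where f : ℝ^N → ℝ is differentiable with L-Lipschitz gradient and g : ℝ^N → ℝ ∪ {+∞} is proper lower semicontinuous. Let A ∈ SPD(N) with A ⪯ Id, α > 0, β ≥ 0, and suppose x^{n+1} satisfies the inclusion A(xⁿ − x^{n+1})/α − ∇f(xⁿ) + (β/α)A(xⁿ − x^{n-1}) ∈ ∂g(x^{n+1}). Then dist(0, ∂h(x^{n+1})) ≤ (1/α + L)‖x^{n+1} − xⁿ‖ + (β/α)‖xⁿ − x^{n-1}‖. -/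
open Filter Topology

noncomputable def frechetSubdiff {E : Type*} [NormedAddCommGroup E] [InnerProductSpace ℝ E]
    (f : E → EReal) (x : E) : Set E :=
  {v | f x ≠ ⊤ ∧ ∀ ε : ℝ, 0 < ε →
    ∀ᶠ y in 𝓝 x, f x + (((inner ℝ v (y - x) : ℝ) - ε * ‖y - x‖ : ℝ) : EReal) ≤ f y}

noncomputable def limitingSubdiff {E : Type*} [NormedAddCommGroup E] [InnerProductSpace ℝ E]
    (f : E → EReal) (x : E) : Set E :=
  {v | ∃ xs vs : ℕ → E, Tendsto xs atTop (𝓝 x) ∧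
      Tendsto (fun n => f (xs n)) atTop (𝓝 (f x)) ∧
      (∀ n, vs n ∈ frechetSubdiff f (xs n)) ∧ Tendsto vs atTop (𝓝 v)}

noncomputable def lazySlope {E : Type*} [NormedAddCommGroup E] [InnerProductSpace ℝ E]
    (f : E → EReal) (x : E) : ENNReal :=
  ⨅ v ∈ limitingSubdiff f x, (‖v‖₊ : ENNReal)

lemma frechet_sum_aux {E : Type*} [NormedAddCommGroup E] [InnerProductSpace ℝ E] [CompleteSpace E]
    (f : E → ℝ) (g : E → EReal) (hb : ∀ x, g x ≠ ⊥) {y w v : E}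
    (hfy : HasGradientAt f w y) (hv : v ∈ frechetSubdiff g y) :
    w + v ∈ frechetSubdiff (fun x => (f x : EReal) + g x) y := by
  obtain ⟨hgy, hsub⟩ := hv
  obtain ⟨r, hr⟩ : ∃ r : ℝ, g y = (r : ℝ) := ⟨(g y).toReal, (EReal.coe_toReal hgy (hb y)).symm⟩
  constructor
  · simp only [hr, ← EReal.coe_add]
    exact EReal.coe_ne_top _
  · intro ε hε
    have h1 := hsub (ε / 2) (by linarith)
    have h2 : ∀ᶠ z in 𝓝 y, ‖f z - f y - (inner ℝ w (z - y) : ℝ)‖ ≤ ε / 2 * ‖z - y‖ :=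
      (hasGradientAt_iff_isLittleO.mp hfy).def (by linarith)
    filter_upwards [h1, h2] with z hg hf2
    by_cases hz : g z = ⊤
    · simp only [hz, EReal.add_top_of_ne_bot (EReal.coe_ne_bot (f z))]
      exact le_top
    · obtain ⟨s, hs⟩ : ∃ s : ℝ, g z = (s : ℝ) := ⟨(g z).toReal, (EReal.coe_toReal hz (hb z)).symm⟩
      rw [hr, hs] at hg ⊢
      norm_cast at hg ⊢
      rw [Real.norm_eq_abs, abs_le] at hf2
      have hinner : (inner ℝ (w + v) (z - y) : ℝ) = inner ℝ w (z - y) + inner ℝ v (z - y) :=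
        inner_add_left _ _ _
      linarith [hf2.1]

theorem stmt7 {N : ℕ} (f : EuclideanSpace ℝ (Fin N) → ℝ)
    (f' : EuclideanSpace ℝ (Fin N) → EuclideanSpace ℝ (Fin N))
    (hf : ∀ x, HasGradientAt f (f' x) x)
    (L : ℝ) (hL : 0 < L) (hlip : ∀ x y, ‖f' x - f' y‖ ≤ L * ‖x - y‖)
    (g : EuclideanSpace ℝ (Fin N) → EReal)
    (hproper : (∀ x, g x ≠ ⊥) ∧ ∃ x, g x ≠ ⊤)
    (hlsc : LowerSemicontinuous g)
    (A : EuclideanSpace ℝ (Fin N) →L[ℝ] EuclideanSpace ℝ (Fin N))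
    (hsymm : ∀ v w, (inner ℝ (A v) w : ℝ) = (inner ℝ v (A w) : ℝ))
    (hpos : ∀ v, v ≠ 0 → 0 < (inner ℝ (A v) v : ℝ))
    (hAle : ∀ v, ‖A v‖ ≤ ‖v‖)
    (α β : ℝ) (hα : 0 < α) (hβ : 0 ≤ β)
    (xnext xn xprev : EuclideanSpace ℝ (Fin N))
    (hincl : α⁻¹ • A (xn - xnext) - f' xn + (β / α) • A (xn - xprev) ∈
        limitingSubdiff g xnext) :
    lazySlope (fun x => (f x : EReal) + g x) xnext ≤
      ENNReal.ofReal ((1 / α + L) * ‖xnext - xn‖ + β / α * ‖xn - xprev‖) := by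
  obtain ⟨xs, vs, hxs, hgxs, hvs, hvlim⟩ := hincl
  set w : EuclideanSpace ℝ (Fin N) :=
    α⁻¹ • A (xn - xnext) - f' xn + (β / α) • A (xn - xprev) with hw
  set v0 : EuclideanSpace ℝ (Fin N) := f' xnext + w with hv0
  -- f' is continuous (Lipschitz)
  have hf'cont : Continuous f' := by
    refine (LipschitzWith.of_dist_le_mul (K := Real.toNNReal L) (f := f') ?_).continuous
    intro a b
    rw [dist_eq_norm, dist_eq_norm, Real.coe_toNNReal _ hL.le]
    exact hlip a b
  have hmem : v0 ∈ limitingSubdiff (fun x => (f x : EReal) + g x) xnext := by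
    refine ⟨xs, fun n => f' (xs n) + vs n, hxs, ?_, ?_, ?_⟩
    · -- Tendsto (f + g) (xs n) → f xnext + g xnext
      have hfc : Tendsto (fun n => ((f (xs n) : EReal), g (xs n))) atTop
          (𝓝 ((f xnext : EReal), g xnext)) := by
        refine Tendsto.prodMk_nhds ?_ hgxs
        exact (continuous_coe_real_ereal.tendsto _).comp
          (((hf xnext).differentiableAt.continuousAt.tendsto).comp hxs)
      exact (EReal.continuousAt_add (Or.inl (EReal.coe_ne_top _))
        (Or.inl (EReal.coe_ne_bot _))).tendsto.comp hfc
    · intro n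
      exact frechet_sum_aux f g hproper.1 (hf (xs n)) (hvs n)
    · exact ((hf'cont.tendsto _).comp hxs).add hvlim
  have hnorm : ‖v0‖ ≤ (1 / α + L) * ‖xnext - xn‖ + β / α * ‖xn - xprev‖ := by
    have heq : v0 = α⁻¹ • A (xn - xnext) + (f' xnext - f' xn) + (β / α) • A (xn - xprev) := by
      rw [hv0, hw]; abel
    rw [heq]
    calc ‖α⁻¹ • A (xn - xnext) + (f' xnext - f' xn) + (β / α) • A (xn - xprev)‖
        ≤ ‖α⁻¹ • A (xn - xnext) + (f' xnext - f' xn)‖ + ‖(β / α) • A (xn - xprev)‖ :=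
          norm_add_le _ _
      _ ≤ ‖α⁻¹ • A (xn - xnext)‖ + ‖f' xnext - f' xn‖ + ‖(β / α) • A (xn - xprev)‖ := by
          gcongr; exact norm_add_le _ _
      _ ≤ α⁻¹ * ‖xn - xnext‖ + L * ‖xnext - xn‖ + (β / α) * ‖xn - xprev‖ := by
          gcongr
          · rw [norm_smul, Real.norm_eq_abs, abs_of_pos (by positivity)]
            gcongr; exact hAle _
          · exact hlip _ _
          · rw [norm_smul, Real.norm_eq_abs, abs_of_nonneg (by positivity)]
            gcongr; exact hAle _
      _ = (1 / α + L) * ‖xnext - xn‖ + β / α * ‖xn - xprev‖ := by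
          rw [norm_sub_rev xn xnext]; ring
  calc lazySlope (fun x => (f x : EReal) + g x) xnext
      ≤ (‖v0‖₊ : ENNReal) := iInf₂_le v0 hmem
    _ ≤ ENNReal.ofReal ((1 / α + L) * ‖xnext - xn‖ + β / α * ‖xn - xprev‖) := by
        rw [← ENNReal.ofReal_coe_nnreal, coe_nnnorm]
        exact ENNReal.ofReal_le_ofReal hnorm
end

section
/- Let (dₙ) be a sequence of nonnegative reals, c ≥ 0, (Dₙ) nonnegative reals with Σₙ Dₙ < ∞, and (εₙ) nonnegative with Σₙ εₙ < ∞. Suppose for all n ≥ n₀: 2dₙ ≤ c Dₙ + (1/2)(dₙ + d_{n-1}) + εₙ. Then Σₙ dₙ < ∞. -/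
open Filter Topology

theorem stmt11 (d D ε : ℕ → ℝ) (c : ℝ) (hc : 0 ≤ c)
    (hd0 : ∀ n, 0 ≤ d n) (hD0 : ∀ n, 0 ≤ D n) (hε0 : ∀ n, 0 ≤ ε n)
    (hD : Summable D) (hε : Summable ε) (n₀ : ℕ)
    (h : ∀ n : ℕ, n₀ ≤ n → 2 * d n ≤ c * D n + 1 / 2 * (d n + d (n - 1)) + ε n) :
    Summable d := by
  -- pointwise recursion: d (i+n₀+1) ≤ (1/3) d (i+n₀) + (2/3)(c D + ε)
  have key : ∀ i : ℕ, d (i + (n₀ + 1)) ≤ 1/3 * d (i + n₀)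
      + 2/3 * (c * D (i + (n₀ + 1)) + ε (i + (n₀ + 1))) := by
    intro i
    have hle : n₀ ≤ i + (n₀ + 1) := by omega
    have := h (i + (n₀ + 1)) hle
    have hpred : i + (n₀ + 1) - 1 = i + n₀ := by omega
    rw [hpred] at this
    linarith
  have hDsh : Summable (fun i => D (i + (n₀ + 1))) := (summable_nat_add_iff _).2 hD
  have hεsh : Summable (fun i => ε (i + (n₀ + 1))) := (summable_nat_add_iff _).2 hε
  have hDt : ∀ N : ℕ, ∑ i ∈ Finset.range N, D (i + (n₀ + 1)) ≤ ∑' n, D n := by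
    intro N
    calc ∑ i ∈ Finset.range N, D (i + (n₀ + 1))
        ≤ ∑' i, D (i + (n₀ + 1)) :=
          Summable.sum_le_tsum _ (fun i _ => hD0 _) hDsh
      _ ≤ ∑' n, D n := Summable.tsum_le_tsum_of_inj (· + (n₀ + 1))
          (add_left_injective _) (fun c _ => hD0 c) (fun b => le_refl _) hDsh hD
  have hεt : ∀ N : ℕ, ∑ i ∈ Finset.range N, ε (i + (n₀ + 1)) ≤ ∑' n, ε n := by
    intro N
    calc ∑ i ∈ Finset.range N, ε (i + (n₀ + 1))
        ≤ ∑' i, ε (i + (n₀ + 1)) :=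
          Summable.sum_le_tsum _ (fun i _ => hε0 _) hεsh
      _ ≤ ∑' n, ε n := Summable.tsum_le_tsum_of_inj (· + (n₀ + 1))
          (add_left_injective _) (fun c _ => hε0 c) (fun b => le_refl _) hεsh hε
  -- shift bound: ∑_{i<N} d(i+n₀) ≤ d n₀ + ∑_{i<N} d(i+n₀+1)
  have shift : ∀ N : ℕ, ∑ i ∈ Finset.range N, d (i + n₀)
      ≤ d n₀ + ∑ i ∈ Finset.range N, d (i + (n₀ + 1)) := by
    intro N
    cases N with
    | zero => simp [hd0 n₀]
    | succ M =>
      rw [Finset.sum_range_succ']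
      have h1 : ∑ i ∈ Finset.range M, d (i + 1 + n₀)
          ≤ ∑ i ∈ Finset.range (M + 1), d (i + (n₀ + 1)) := by
        calc ∑ i ∈ Finset.range M, d (i + 1 + n₀)
            = ∑ i ∈ Finset.range M, d (i + (n₀ + 1)) :=
              Finset.sum_congr rfl (fun i _ => by rw [show i + 1 + n₀ = i + (n₀ + 1) by omega])
          _ ≤ ∑ i ∈ Finset.range (M + 1), d (i + (n₀ + 1)) :=
              Finset.sum_le_sum_of_subset_of_nonneg
                (Finset.range_subset_range.2 (Nat.le_succ M)) (fun i _ _ => hd0 _)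
      simp only [Nat.zero_add]
      linarith [h1]
  have bound : ∀ N : ℕ, ∑ i ∈ Finset.range N, d (i + (n₀ + 1))
      ≤ 1/2 * d n₀ + (c * ∑' n, D n + ∑' n, ε n) := by
    intro N
    set T := ∑ i ∈ Finset.range N, d (i + (n₀ + 1)) with hT
    have hsum : T ≤ ∑ i ∈ Finset.range N, (1/3 * d (i + n₀)
        + 2/3 * (c * D (i + (n₀ + 1)) + ε (i + (n₀ + 1)))) :=
      Finset.sum_le_sum (fun i _ => key i)
    rw [Finset.sum_add_distrib, ← Finset.mul_sum, ← Finset.mul_sum] at hsum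
    have h2 : ∑ i ∈ Finset.range N, (c * D (i + (n₀ + 1)) + ε (i + (n₀ + 1)))
        ≤ c * ∑' n, D n + ∑' n, ε n := by
      rw [Finset.sum_add_distrib, ← Finset.mul_sum]
      have := hDt N
      have := hεt N
      nlinarith
    have h3 := shift N
    nlinarith
  have hsummable : Summable (fun i => d (i + (n₀ + 1))) :=
    summable_of_sum_range_le (fun n => hd0 _) bound
  exact (summable_nat_add_iff (n₀ + 1)).1 hsummable
end

section
/- Let g : ℝ^N → ℝ ∪ {+∞} be proper lsc, f : ℝ^N → ℝ continuously differentiable. Suppose a subsequence x^{n_j+1} → x* and y^{n_j} → x*, α_{n_j} ≥ α̲ > 0, A_{n_j} ⪯ Id with smallest eigenvalue bounded below by ς̲ > 0, and for all x ∈ ℝ^N: g(x^{n_j+1}) + ⟨∇f(x^{n_j}), x^{n_j+1} − x^{n_j}⟩ + (1/(2α_{n_j}))‖x^{n_j+1} − y^{n_j}‖²_{A_{n_j}} ≤ g(x) + ⟨∇f(x^{n_j}), x − x^{n_j}⟩ + (1/(2α_{n_j}))‖x − y^{n_j}‖²_{A_{n_j}}, with x^{n_j} → x* as well. Then limsup_{j→∞}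 g(x^{n_j+1}) ≤ g(x*), and combined with lower semicontinuity of g, lim_{j→∞} g(x^{n_j+1}) = g(x*). -/
open Filter Topology

theorem stmt15 {N : ℕ} (g : EuclideanSpace ℝ (Fin N) → EReal)
    (hproper : (∀ x, g x ≠ ⊥) ∧ ∃ x, g x ≠ ⊤)
    (hlsc : LowerSemicontinuous g)
    (f : EuclideanSpace ℝ (Fin N) → ℝ)
    (f' : EuclideanSpace ℝ (Fin N) → EuclideanSpace ℝ (Fin N))
    (hf : ∀ x, HasGradientAt f (f' x) x) (hf'cont : Continuous f')
    -- subsequence data: `xnext j = x^{n_j+1}`, `xcur j = x^{n_j}`, `ycur j = y^{n_j}`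
    (xnext xcur ycur : ℕ → EuclideanSpace ℝ (Fin N))
    (xstar : EuclideanSpace ℝ (Fin N))
    (hxnext : Tendsto xnext atTop (𝓝 xstar))
    (hxcur : Tendsto xcur atTop (𝓝 xstar))
    (hycur : Tendsto ycur atTop (𝓝 xstar))
    (α : ℕ → ℝ) (αbar : ℝ) (hαbar : 0 < αbar) (hα : ∀ j, αbar ≤ α j)
    (A : ℕ → EuclideanSpace ℝ (Fin N) →L[ℝ] EuclideanSpace ℝ (Fin N))
    (hsymm : ∀ j v w, (inner ℝ (A j v) w : ℝ) = (inner ℝ v (A j w) : ℝ))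
    (hAle : ∀ j v, ‖A j v‖ ≤ ‖v‖)
    (ςbar : ℝ) (hςbar : 0 < ςbar)
    (hA : ∀ j (v : EuclideanSpace ℝ (Fin N)), ςbar * ‖v‖ ^ 2 ≤ (inner ℝ (A j v) v : ℝ))
    (hmin : ∀ j : ℕ, ∀ x : EuclideanSpace ℝ (Fin N),
      g (xnext j) + (((inner ℝ (f' (xcur j)) (xnext j - xcur j) : ℝ) +
          1 / (2 * α j) * (inner ℝ (A j (xnext j - ycur j)) (xnext j - ycur j) : ℝ) : ℝ) : EReal) ≤
        g x + (((inner ℝ (f' (xcur j)) (x - xcur j) : ℝ) +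
          1 / (2 * α j) * (inner ℝ (A j (x - ycur j)) (x - ycur j) : ℝ) : ℝ) : EReal)) :
    limsup (fun j => g (xnext j)) atTop ≤ g xstar ∧
      Tendsto (fun j => g (xnext j)) atTop (𝓝 (g xstar)) := by
  -- quadratic terms tend to 0
  have quad : ∀ v : ℕ → EuclideanSpace ℝ (Fin N), Tendsto v atTop (𝓝 0) →
      Tendsto (fun j => 1 / (2 * α j) * (inner ℝ (A j (v j)) (v j) : ℝ)) atTop (𝓝 0) := by
    intro v hv
    have hbound : ∀ j, |1 / (2 * α j) * (inner ℝ (A j (v j)) (v j) : ℝ)| ≤ 1 / (2 * αbar) * ‖v j‖ ^ 2 := by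
      intro j
      have hαj : 0 < α j := lt_of_lt_of_le hαbar (hα j)
      have h0 : (0:ℝ) ≤ (inner ℝ (A j (v j)) (v j) : ℝ) :=
        le_trans (by positivity) (hA j (v j))
      have h1 : (inner ℝ (A j (v j)) (v j) : ℝ) ≤ ‖v j‖ ^ 2 := by
        calc (inner ℝ (A j (v j)) (v j) : ℝ) ≤ ‖A j (v j)‖ * ‖v j‖ := real_inner_le_norm _ _
          _ ≤ ‖v j‖ * ‖v j‖ := by
              exact mul_le_mul_of_nonneg_right (hAle j (v j)) (norm_nonneg _)
          _ = ‖v j‖ ^ 2 := (sq ‖v j‖).symm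
      rw [abs_of_nonneg (by positivity)]
      have h2 : 1 / (2 * α j) ≤ 1 / (2 * αbar) := by
        apply one_div_le_one_div_of_le (by linarith) (by linarith [hα j])
      calc 1 / (2 * α j) * (inner ℝ (A j (v j)) (v j) : ℝ)
          ≤ 1 / (2 * αbar) * (inner ℝ (A j (v j)) (v j) : ℝ) :=
            mul_le_mul_of_nonneg_right h2 h0
        _ ≤ 1 / (2 * αbar) * ‖v j‖ ^ 2 := by
            exact mul_le_mul_of_nonneg_left h1 (by positivity)
    have hnorm : Tendsto (fun j => 1 / (2 * αbar) * ‖v j‖ ^ 2) atTop (𝓝 0) := by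
      have : Tendsto (fun j => ‖v j‖) atTop (𝓝 0) := by
        simpa using hv.norm
      have := ((this.pow 2).const_mul (1 / (2 * αbar)))
      simpa using this
    apply squeeze_zero_norm hbound hnorm
  -- linear terms tend to 0
  have lin : ∀ w : ℕ → EuclideanSpace ℝ (Fin N), Tendsto w atTop (𝓝 0) →
      Tendsto (fun j => (inner ℝ (f' (xcur j)) (w j) : ℝ)) atTop (𝓝 0) := by
    intro w hw
    have h1 : Tendsto (fun j => f' (xcur j)) atTop (𝓝 (f' xstar)) :=
      (hf'cont.tendsto _).comp hxcur
    have h2 := Filter.Tendsto.inner (𝕜 := ℝ) h1 hw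
    simpa using h2
  -- the error sequence
  set s : ℕ → ℝ := fun j => (inner ℝ (f' (xcur j)) (xstar - xcur j) : ℝ) +
      1 / (2 * α j) * (inner ℝ (A j (xstar - ycur j)) (xstar - ycur j) : ℝ) with hs
  set r : ℕ → ℝ := fun j => (inner ℝ (f' (xcur j)) (xnext j - xcur j) : ℝ) +
      1 / (2 * α j) * (inner ℝ (A j (xnext j - ycur j)) (xnext j - ycur j) : ℝ) with hr
  have hεs : Tendsto s atTop (𝓝 0) := by
    have h1 := lin (fun j => xstar - xcur j)
      (by simpa using ((tendsto_const_nhds (x := xstar)).sub hxcur))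
    have h2 := quad (fun j => xstar - ycur j)
      (by simpa using ((tendsto_const_nhds (x := xstar)).sub hycur))
    simpa only [add_zero] using h1.add h2
  have hεr : Tendsto r atTop (𝓝 0) := by
    have h1 := lin (fun j => xnext j - xcur j) (by simpa using (hxnext.sub hxcur))
    have h2 := quad (fun j => xnext j - ycur j) (by simpa using (hxnext.sub hycur))
    simpa only [add_zero] using h1.add h2
  have hε : Tendsto (fun j => s j - r j) atTop (𝓝 0) := by
    simpa using hεs.sub hεr
  -- key inequality
  have key : ∀ j, g (xnext j) ≤ g xstar + ((s j - r j : ℝ) : EReal) := by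
    intro j
    have h := hmin j xstar
    calc g (xnext j) = g (xnext j) + (r j : EReal) - (r j : EReal) :=
          (EReal.add_sub_cancel_right).symm
      _ ≤ g xstar + (s j : EReal) - (r j : EReal) := by
          rw [sub_eq_add_neg, sub_eq_add_neg]
          exact add_le_add_left h _
      _ = g xstar + ((s j - r j : ℝ) : EReal) := by
          rw [sub_eq_add_neg, add_assoc, ← EReal.coe_neg, ← EReal.coe_add,
            ← sub_eq_add_neg]
  -- liminf bound from lower semicontinuity
  have hliminf : g xstar ≤ liminf (fun j => g (xnext j)) atTop := by
    rw [le_liminf_iff]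
    intro y hy
    exact hxnext.eventually (hlsc xstar y hy)
  -- limsup bound
  have hlimsup : limsup (fun j => g (xnext j)) atTop ≤ g xstar := by
    have h1 : limsup (fun j => g (xnext j)) atTop ≤
        limsup (fun j => g xstar + ((s j - r j : ℝ) : EReal)) atTop :=
      limsup_le_limsup (Eventually.of_forall key)
    refine h1.trans ?_
    rcases eq_or_ne (g xstar) ⊤ with ht | ht
    · exact ht ▸ le_top
    · obtain ⟨a, ha⟩ : ∃ a : ℝ, g xstar = (a : EReal) :=
        ⟨(g xstar).toReal, (EReal.coe_toReal ht (hproper.1 xstar)).symm⟩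
      rw [ha]
      have htend : Tendsto (fun j => ((a : EReal) + ((s j - r j : ℝ) : EReal))) atTop
          (𝓝 (a : EReal)) := by
        have : Tendsto (fun j => ((a + (s j - r j) : ℝ) : EReal)) atTop (𝓝 ((a : ℝ) : EReal)) := by
          apply (continuous_coe_real_ereal.tendsto _).comp
          simpa using (tendsto_const_nhds.add hε)
        simpa only [EReal.coe_add] using this
      exact le_of_eq htend.limsup_eq
  exact ⟨hlimsup, tendsto_of_le_liminf_of_limsup_le hliminf hlimsup⟩
end
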